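/- Let M be a real symmetric positive definite matrix with all diagonal entries equal to Z_II > 0. Then Tr(M⁻²) + Tr(M⁻¹)² + √(π·Tr(M⁻²))·Tr(M⁻¹) ≥ (N + N² + √(πN)·N)/Z_II², i.e., the channel-gain scaling law with mutual coupling is at least the scaling law without mutual coupling. -/

import Mathlib

open Matrix Real Finset

open scoped MatrixOrder in
lemma inv_diag_ge {N : ℕ} (M : Matrix (Fin N) (Fin N) ℝ) (hM : M.PosDef) (n : Fin N) :
    1 / M n n ≤ M⁻¹ n n := by
  set B := CFC.sqrt M with hB
  have hBB : B * B = M := CFC.sqrt_mul_sqrt_self M hM.posSemidef.nonneg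
  have hBsym : Bᵀ = B := (CFC.sqrt_nonneg M).posSemidef.1
  have hs : ∀ i j, B i j = B j i := fun i j => (congrFun (congrFun hBsym i) j).symm
  have hdet : IsUnit B.det := by
    have : B.det * B.det = M.det := by rw [← Matrix.det_mul, hBB]
    have hMdet : M.det ≠ 0 := (hM.det_pos).ne'
    exact isUnit_iff_ne_zero.mpr (fun h => hMdet (by rw [← this, h, mul_zero]))
  have hIsym : (B⁻¹)ᵀ = B⁻¹ := by rw [Matrix.transpose_nonsing_inv, hBsym]
  have hs' : ∀ i j, B⁻¹ i j = B⁻¹ j i := fun i j => by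
    exact (congrFun (congrFun hIsym i) j).symm
  have hMn : ∑ i, B i n * B i n = M n n := by
    rw [← hBB, Matrix.mul_apply]
    exact Finset.sum_congr rfl (fun i _ => by rw [hs n i])
  have hMinv : M⁻¹ = B⁻¹ * B⁻¹ := by rw [← hBB, Matrix.mul_inv_rev]
  have hInvn : ∑ i, B⁻¹ i n * B⁻¹ i n = M⁻¹ n n := by
    rw [hMinv, Matrix.mul_apply]
    exact Finset.sum_congr rfl (fun i _ => by rw [hs' n i])
  have hone : ∑ i, B i n * B⁻¹ i n = 1 := by
    have hBI : B * B⁻¹ = 1 := Matrix.mul_nonsing_inv B hdet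
    have h2 := congrArg (fun A => A n n) hBI
    simp only [Matrix.mul_apply, Matrix.one_apply_eq] at h2
    rw [← h2]
    exact Finset.sum_congr rfl (fun i _ => by rw [hs n i])
  have cs := Finset.sum_mul_sq_le_sq_mul_sq Finset.univ (fun i => B i n) (fun i => B⁻¹ i n)
  simp only [← pow_two] at hMn hInvn
  rw [hone, hMn, hInvn, one_pow] at cs
  have hMnn : 0 < M n n := by
    have hne : (Pi.single n 1 : Fin N → ℝ) ≠ 0 :=
      fun h => one_ne_zero (α := ℝ) (by simpa using congrFun h n)
    exact hM.diag_pos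
  rw [div_le_iff₀ hMnn]
  nlinarith [hMnn]

theorem scaling_law_MC_ge_NoMC (N : ℕ) (ZII : ℝ) (hZII : 0 < ZII)
    (M : Matrix (Fin N) (Fin N) ℝ) (hM : M.PosDef) (hdiag : ∀ n, M n n = ZII) :
    ((N : ℝ) + (N : ℝ) ^ 2 + Real.sqrt (Real.pi * N) * N) / ZII ^ 2 ≤
      (M⁻¹ ^ 2).trace + (M⁻¹).trace ^ 2 +
        Real.sqrt (Real.pi * (M⁻¹ ^ 2).trace) * (M⁻¹).trace := by
  set T := (M⁻¹).trace with hTdef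
  set S := (M⁻¹ ^ 2).trace with hSdef
  -- inverse is symmetric
  have hsym : ∀ i j, M⁻¹ i j = M⁻¹ j i := by
    intro i j
    have h := hM.isHermitian.inv
    have h2 := congrFun (congrFun h.eq i) j
    simpa using h2.symm
  -- diagonal bound
  have hdg : ∀ n, 1 / ZII ≤ M⁻¹ n n := fun n => by
    have := inv_diag_ge M hM n; rwa [hdiag n] at this
  -- trace lower bound
  have hT : (N : ℝ) / ZII ≤ T := by
    rw [hTdef, Matrix.trace]
    calc (N : ℝ) / ZII = ∑ _i : Fin N, 1 / ZII := by
          simp [div_eq_mul_inv, one_div]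
      _ ≤ ∑ i, M⁻¹ i i := Finset.sum_le_sum fun i _ => hdg i
      _ = _ := rfl
  have hTnn : 0 ≤ T := le_trans (by positivity) hT
  -- trace of square lower bound
  have hSdiag : ∑ i, (M⁻¹ i i) ^ 2 ≤ S := by
    rw [hSdef, pow_two, Matrix.trace]
    have : ∀ i : Fin N, (M⁻¹ i i) ^ 2 ≤ (M⁻¹ * M⁻¹) i i := by
      intro i
      rw [Matrix.mul_apply]
      have := Finset.single_le_sum (f := fun j => M⁻¹ i j * M⁻¹ j i)
        (fun j _ => by simpa [hsym i j] using mul_self_nonneg (M⁻¹ j i)) (Finset.mem_univ i)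
      simpa [pow_two] using this
    exact Finset.sum_le_sum fun i _ => this i
  have hS : (N : ℝ) / ZII ^ 2 ≤ S := by
    rcases Nat.eq_zero_or_pos N with h0 | hN
    · subst h0
      simp [hSdef, Matrix.trace]
    · have hcs : T ^ 2 ≤ (N : ℝ) * ∑ i, (M⁻¹ i i) ^ 2 := by
        have := sq_sum_le_card_mul_sum_sq (s := (Finset.univ : Finset (Fin N)))
          (f := fun i => M⁻¹ i i)
        simpa [hTdef, Matrix.trace, Matrix.diag] using this
      have hNpos : (0 : ℝ) < N := by exact_mod_cast hN
      have h1 : ((N : ℝ) / ZII) ^ 2 ≤ (N : ℝ) * S := by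
        calc ((N : ℝ) / ZII) ^ 2 ≤ T ^ 2 := pow_le_pow_left₀ (by positivity) hT 2
          _ ≤ (N : ℝ) * ∑ i, (M⁻¹ i i) ^ 2 := hcs
          _ ≤ (N : ℝ) * S := by gcongr
      have h1' : (N : ℝ) ^ 2 ≤ (N : ℝ) * S * ZII ^ 2 := by
        rw [div_pow, div_le_iff₀ (by positivity)] at h1
        linarith
      rw [div_le_iff₀ (by positivity)]
      nlinarith [h1', hNpos]
  -- assemble
  have hSnn : 0 ≤ S := le_trans (by positivity) hS
  have hsqrt : Real.sqrt (Real.pi * N) / ZII ≤ Real.sqrt (Real.pi * S) := by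
    have h1 : Real.pi * N / ZII ^ 2 ≤ Real.pi * S := by
      rw [mul_div_assoc]
      exact mul_le_mul_of_nonneg_left hS Real.pi_nonneg
    calc Real.sqrt (Real.pi * N) / ZII = Real.sqrt (Real.pi * N / ZII ^ 2) := by
          rw [Real.sqrt_div (by positivity), Real.sqrt_sq hZII.le]
      _ ≤ Real.sqrt (Real.pi * S) := Real.sqrt_le_sqrt h1
  have h3 : Real.sqrt (Real.pi * N) / ZII * ((N : ℝ) / ZII) ≤ Real.sqrt (Real.pi * S) * T :=
    mul_le_mul hsqrt hT (by positivity) (Real.sqrt_nonneg _)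
  calc ((N : ℝ) + (N : ℝ) ^ 2 + Real.sqrt (Real.pi * N) * N) / ZII ^ 2
      = (N : ℝ) / ZII ^ 2 + ((N : ℝ) / ZII) ^ 2
        + Real.sqrt (Real.pi * N) / ZII * ((N : ℝ) / ZII) := by
        field_simp
    _ ≤ S + T ^ 2 + Real.sqrt (Real.pi * S) * T := by
        have h2 : ((N : ℝ) / ZII) ^ 2 ≤ T ^ 2 := pow_le_pow_left₀ (by positivity) hT 2
        exact add_le_add (add_le_add hS h2) h3
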